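/- A point H ∈ E lies in the topological frontier of the Dirichlet domain D if and only if tH ∈ D̄ for every t ∈ [0,1] and tH ∉ D̄ for every t > 1. (This is the lattice formulation of the statement that the tangent cut locus of the flat torus E/Γ at the origin is the boundary of D.) -/

import Mathlib

open scoped RealInnerProductSpace
open Set Metric

lemma aux_norm_le_iff {E : Type*} [NormedAddCommGroup E] [InnerProductSpace ℝ E]
    (x γ : E) : ‖x‖ ≤ ‖x + γ‖ ↔ 0 ≤ 2 * ⟪x, γ⟫ + ‖γ‖ ^ 2 := by
  have h1 : ‖x + γ‖ ^ 2 = ‖x‖ ^ 2 + 2 * ⟪x, γ⟫ + ‖γ‖ ^ 2 := norm_add_sq_real x γ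
  constructor
  · intro h; nlinarith [norm_nonneg x]
  · intro h; nlinarith [norm_nonneg x, norm_nonneg (x + γ)]

lemma aux_norm_lt_iff {E : Type*} [NormedAddCommGroup E] [InnerProductSpace ℝ E]
    (x γ : E) : ‖x‖ < ‖x + γ‖ ↔ 0 < 2 * ⟪x, γ⟫ + ‖γ‖ ^ 2 := by
  have h1 : ‖x + γ‖ ^ 2 = ‖x‖ ^ 2 + 2 * ⟪x, γ⟫ + ‖γ‖ ^ 2 := norm_add_sq_real x γ
  constructor
  · intro h; nlinarith [norm_nonneg x]
  · intro h; nlinarith [norm_nonneg x, norm_nonneg (x + γ)]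

/-- The tangent cut locus of the flat torus `E/Γ` at the origin, in lattice form:
`H` lies in the frontier of the Dirichlet domain `D` of the full-rank lattice `Γ`
iff `tH ∈ D̄` for all `t ∈ [0,1]` and `tH ∉ D̄` for all `t > 1`. -/
theorem frontier_dirichlet_iff_cut_point {E : Type*}
    [NormedAddCommGroup E] [InnerProductSpace ℝ E] [FiniteDimensional ℝ E]
    (Γ : AddSubgroup E) [DiscreteTopology Γ]
    (hspan : Submodule.span ℝ (Γ : Set E) = ⊤) (H : E) :
    H ∈ frontier {x : E | ∀ γ ∈ Γ, γ ≠ 0 → ‖x‖ < ‖x + γ‖} ↔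
      ((∀ t : ℝ, t ∈ Set.Icc (0 : ℝ) 1 → ∀ γ ∈ Γ, ‖t • H‖ ≤ ‖t • H + γ‖) ∧
       (∀ t : ℝ, 1 < t → ¬ (∀ γ ∈ Γ, ‖t • H‖ ≤ ‖t • H + γ‖))) := by
  classical
  set D : Set E := {x : E | ∀ γ ∈ Γ, γ ≠ 0 → ‖x‖ < ‖x + γ‖} with hDdef
  set C : Set E := {x : E | ∀ γ ∈ Γ, ‖x‖ ≤ ‖x + γ‖} with hCdef
  -- D ⊆ C
  have hDC : D ⊆ C := by
    intro x hx γ hγ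
    rcases eq_or_ne γ 0 with rfl | hne
    · simp
    · exact (hx γ hγ hne).le
  -- C is closed
  have hCclosed : IsClosed C := by
    have : C = ⋂ γ ∈ (Γ : Set E), {x : E | ‖x‖ ≤ ‖x + γ‖} := by
      ext x; simp [hCdef]
    rw [this]
    exact isClosed_biInter fun γ _ =>
      isClosed_le continuous_norm ((continuous_id.add continuous_const).norm)
  -- D is open
  have hDopen : IsOpen D := by
    rw [isOpen_iff_mem_nhds]
    intro x hx
    set S : Set E := Metric.closedBall (0 : E) (2 * ‖x‖ + 2) ∩ (Γ : Set E) with hSdef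
    have hSfin : S.Finite :=
      Metric.finite_isBounded_inter_isClosed DiscreteTopology.isDiscrete Metric.isBounded_closedBall
        AddSubgroup.isClosed_of_discrete
    set U : Set E := Metric.ball x 1 ∩ ⋂ γ ∈ S \ {0}, {y : E | ‖y‖ < ‖y + γ‖} with hUdef
    have hUopen : IsOpen U := by
      refine Metric.isOpen_ball.inter ?_
      exact hSfin.diff.isOpen_biInter fun γ _ =>
        isOpen_lt continuous_norm ((continuous_id.add continuous_const).norm)
    have hxU : x ∈ U := by
      refine ⟨Metric.mem_ball_self one_pos, ?_⟩
      simp only [Set.mem_iInter]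
      intro γ hγ
      exact hx γ hγ.1.2 (by simpa using hγ.2)
    have hUD : U ⊆ D := by
      rintro y ⟨hy1, hy2⟩ γ hγ hne
      by_cases hS : γ ∈ S
      · simp only [Set.mem_iInter] at hy2
        exact hy2 γ ⟨hS, by simpa using hne⟩
      · -- γ is far: ‖γ‖ > 2‖x‖+2 ≥ 2‖y‖
        have hfar : 2 * ‖x‖ + 2 < ‖γ‖ := by
          by_contra hcon
          exact hS ⟨by simpa [Metric.mem_closedBall] using not_lt.mp hcon, hγ⟩
        have hyx : ‖y‖ < ‖x‖ + 1 := by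
          have := mem_ball_iff_norm.mp hy1
          have h2 : ‖y‖ - ‖x‖ ≤ ‖y - x‖ := norm_sub_norm_le y x
          linarith
        have hlow : ‖γ‖ - ‖y‖ ≤ ‖y + γ‖ := by
          have := norm_sub_norm_le γ (-y)
          simpa [sub_neg_eq_add, add_comm] using this
        linarith
    exact Filter.mem_of_superset (hUopen.mem_nhds hxU) hUD
  -- if x ∈ C, t ∈ [0,1], then t • x ∈ C
  have hstar : ∀ x ∈ C, ∀ t : ℝ, 0 ≤ t → t ≤ 1 → t • x ∈ C := by
    intro x hx t ht0 ht1 γ hγ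
    rw [aux_norm_le_iff]
    rw [real_inner_smul_left]
    have hxγ : 0 ≤ 2 * ⟪x, γ⟫ + ‖γ‖ ^ 2 := (aux_norm_le_iff x γ).mp (hx γ hγ)
    nlinarith [sq_nonneg ‖γ‖]
  -- if x ∈ C, 0 ≤ t < 1, then t • x ∈ D
  have hstar' : ∀ x ∈ C, ∀ t : ℝ, 0 ≤ t → t < 1 → t • x ∈ D := by
    intro x hx t ht0 ht1 γ hγ hne
    rw [aux_norm_lt_iff, real_inner_smul_left]
    have hxγ : 0 ≤ 2 * ⟪x, γ⟫ + ‖γ‖ ^ 2 := (aux_norm_le_iff x γ).mp (hx γ hγ)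
    have hγpos : 0 < ‖γ‖ := norm_pos_iff.mpr hne
    nlinarith [mul_nonneg ht0 hxγ, mul_pos (by linarith : (0:ℝ) < 1 - t) (pow_pos hγpos 2)]
  have hfr : frontier D = closure D \ D := by
    rw [frontier, hDopen.interior_eq]
  constructor
  · rintro hH
    rw [hfr] at hH
    obtain ⟨hHcl, hHD⟩ := hH
    have hHC : H ∈ C := closure_minimal hDC hCclosed hHcl
    constructor
    · rintro t ⟨ht0, ht1⟩ γ hγ
      exact hstar H hHC t ht0 ht1 γ hγ
    · -- there is γ₀ ≠ 0 with equality at H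
      simp only [hDdef, Set.mem_setOf_eq, not_forall] at hHD
      obtain ⟨γ₀, hγ₀Γ, hγ₀ne, hge⟩ := hHD
      have h1 : 0 ≤ 2 * ⟪H, γ₀⟫ + ‖γ₀‖ ^ 2 := (aux_norm_le_iff H γ₀).mp (hHC γ₀ hγ₀Γ)
      have h2 : ¬ (0 < 2 * ⟪H, γ₀⟫ + ‖γ₀‖ ^ 2) := fun hc => hge ((aux_norm_lt_iff H γ₀).mpr hc)
      have heq : 2 * ⟪H, γ₀⟫ + ‖γ₀‖ ^ 2 = 0 := le_antisymm (not_lt.mp h2) h1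
      have hγ₀pos : 0 < ‖γ₀‖ := norm_pos_iff.mpr hγ₀ne
      intro t ht hall
      have := (aux_norm_le_iff (t • H) γ₀).mp (hall γ₀ hγ₀Γ)
      rw [real_inner_smul_left] at this
      have h3 : 2 * (t * ⟪H, γ₀⟫) + ‖γ₀‖ ^ 2 = (1 - t) * ‖γ₀‖ ^ 2 := by
        linear_combination t * heq
      nlinarith [mul_pos (by linarith : (0:ℝ) < t - 1) (pow_pos hγ₀pos 2)]
  · rintro ⟨h1, h2⟩
    have hHC : H ∈ C := by
      intro γ hγ
      have := h1 1 ⟨zero_le_one, le_refl 1⟩ γ hγ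
      simpa using this
    have hHD : H ∉ D := by
      intro hHD
      obtain ⟨ε, hε, hball⟩ := Metric.isOpen_iff.mp hDopen H hHD
      have hden : 0 < 2 * (‖H‖ + 1) := by positivity
      have hδpos : 0 < ε / (2 * (‖H‖ + 1)) := div_pos hε hden
      refine h2 (1 + ε / (2 * (‖H‖ + 1))) (by linarith) fun γ hγ => hDC (hball ?_) γ hγ
      rw [mem_ball_iff_norm]
      have heq : (1 + ε / (2 * (‖H‖ + 1))) • H - H = (ε / (2 * (‖H‖ + 1))) • H := by
        rw [add_smul, one_smul]; abel
      rw [heq, norm_smul, Real.norm_eq_abs, abs_of_pos hδpos]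
      rw [div_mul_eq_mul_div, div_lt_iff₀ hden]
      nlinarith [norm_nonneg H]
    rw [hfr]
    refine ⟨?_, hHD⟩
    -- H = lim_{t → 1⁻} t • H, with t • H ∈ D
    have htend : Filter.Tendsto (fun t : ℝ => t • H) (nhdsWithin 1 (Set.Iio 1)) (nhds H) := by
      have : Filter.Tendsto (fun t : ℝ => t • H) (nhds 1) (nhds ((1 : ℝ) • H)) :=
        (continuous_id.smul continuous_const).tendsto 1
      rw [one_smul] at this
      exact this.mono_left nhdsWithin_le_nhds
    refine mem_closure_of_tendsto htend ?_
    filter_upwards [Ioo_mem_nhdsLT_of_mem (by norm_num : (1:ℝ) ∈ Set.Ioc 0 1)] with t ht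
    exact hstar' H hHC t ht.1.le ht.2
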